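/- Let λ : G → End₀(A) be an ideal partial representation on an algebra A and (π, M) a covariant representation of λ. Then for all g,h ∈ G, x ∈ A, m ∈ M: λ_g(x)·π_h(m) = π_g(x·π_{g⁻¹h}(m)). -/
import Mathlib

/-- For an ideal partial representation `l = λ` on an algebra `A` and a
covariant representation `(π, M)` of `λ` (where `σ x m` denotes the module
action `x·m`): `λ_g(x)·π_h(m) = π_g(x·π_{g⁻¹h}(m))`. -/
theorem stmt16 {K G A M : Type*} [CommRing K] [Group G]
    [NonUnitalRing A] [Module K A] [AddCommGroup M] [Module K M]
    (σ : A →ₗ[K] M →ₗ[K] M)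
    (hσ : ∀ (x y : A) (m : M), σ (x * y) m = σ x (σ y m))
    (l : G → A →ₗ[K] A)
    (hlmul : ∀ (g : G) (x y : A), l g (x * y) = l g x * l g y)
    (hl1 : ∀ x : A, l 1 x = x)
    (hl2 : ∀ (g h : G) (x : A), l g⁻¹ (l g (l h x)) = l g⁻¹ (l (g * h) x))
    (hl3 : ∀ (g h : G) (x : A), l g (l h (l h⁻¹ x)) = l (g * h) (l h⁻¹ x))
    (hlideal : ∀ (g : G) (x y : A),
      x * l g y ∈ LinearMap.range (l g) ∧ l g y * x ∈ LinearMap.range (l g))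
    (π : G → M →ₗ[K] M)
    (hπ1 : ∀ m : M, π 1 m = m)
    (hπ2 : ∀ (g h : G) (m : M), π g⁻¹ (π g (π h m)) = π g⁻¹ (π (g * h) m))
    (hπ3 : ∀ (g h : G) (m : M), π g (π h (π h⁻¹ m)) = π (g * h) (π h⁻¹ m))
    -- covariance: π_g(x·m) = λ_g(x)·π_g(m)
    (hcov : ∀ (g : G) (x : A) (m : M), π g (σ x m) = σ (l g x) (π g m))
    -- ε_g(x·m) = e_g(x)·m = x·ε_g(m), with ε_g = π_g π_{g⁻¹}, e_g = λ_g λ_{g⁻¹}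
    (heps1 : ∀ (g : G) (x : A) (m : M),
      π g (π g⁻¹ (σ x m)) = σ (l g (l g⁻¹ x)) m)
    (heps2 : ∀ (g : G) (x : A) (m : M),
      π g (π g⁻¹ (σ x m)) = σ x (π g (π g⁻¹ m))) :
    ∀ (g h : G) (x : A) (m : M),
      σ (l g x) (π h m) = π g (σ x (π (g⁻¹ * h) m)) := by
  intro g h x m
  have key : l g (l g⁻¹ (l g x)) = l g x := by
    have h2 := hl2 g⁻¹ g x
    rw [inv_inv, inv_mul_cancel, hl1] at h2
    exact h2
  have hpi : π g (π g⁻¹ (π h m)) = π g (π (g⁻¹ * h) m) := by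
    have := hπ2 g⁻¹ h m
    rwa [inv_inv] at this
  calc σ (l g x) (π h m)
      = σ (l g (l g⁻¹ (l g x))) (π h m) := by rw [key]
    _ = π g (π g⁻¹ (σ (l g x) (π h m))) := (heps1 g (l g x) (π h m)).symm
    _ = σ (l g x) (π g (π g⁻¹ (π h m))) := heps2 g (l g x) (π h m)
    _ = σ (l g x) (π g (π (g⁻¹ * h) m)) := by rw [hpi]
    _ = π g (σ x (π (g⁻¹ * h) m)) := (hcov g x (π (g⁻¹ * h) m)).symm
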